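/- If v₁, v₂, …, v_k with v₁ = s and v_k = t is a Hamiltonian s-t path in G (so k = |V|), then the sequence (v₁,1),(v₁,2),(v₂,1),(v₂,2),…,(v_k,1),(v_k,2) is a directed Hamiltonian path in Ḡ from (s,1) to (t,2). -/

import Mathlib

/-- The directed graph Ḡ on `V × Bool` (`false` = first copy, `true` = second copy):
edges `(v,1) → (v,2)` for every `v`, and `(i,2) → (j,1)` whenever `{i,j} ∈ E`. -/
def DbarAdj {V : Type*} (G : SimpleGraph V) : V × Bool → V × Bool → Prop :=
  fun a b =>
    (a.2 = false ∧ b.2 = true ∧ b.1 = a.1) ∨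
    (a.2 = true ∧ b.2 = false ∧ G.Adj a.1 b.1)

/-- The sequence `(v₁,1),(v₁,2),(v₂,1),(v₂,2),…` obtained from `v₁,v₂,…`. -/
def doubleList {V : Type*} (vs : List V) : List (V × Bool) :=
  (vs.map fun v => [(v, false), (v, true)]).flatten

lemma doubleList_nil {V : Type*} : doubleList ([] : List V) = [] := rfl

lemma doubleList_cons {V : Type*} (v : V) (l : List V) :
    doubleList (v :: l) = (v, false) :: (v, true) :: doubleList l := rfl

lemma mem_doubleList {V : Type*} (vs : List V) (x : V × Bool) :
    x ∈ doubleList vs ↔ x.1 ∈ vs := by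
  induction vs with
  | nil => simp [doubleList_nil]
  | cons v l ih =>
    obtain ⟨a, b⟩ := x
    cases b <;> simp_all [doubleList_cons, Prod.ext_iff]

lemma nodup_doubleList {V : Type*} (vs : List V) (h : vs.Nodup) :
    (doubleList vs).Nodup := by
  induction vs with
  | nil => simp [doubleList_nil]
  | cons v l ih =>
    simp only [List.nodup_cons] at h
    simp only [doubleList_cons, List.nodup_cons, List.mem_cons]
    refine ⟨?_, ?_, ih h.2⟩
    · rintro (h1 | h1)
      · exact absurd (congrArg Prod.snd h1) (by simp)
      · exact h.1 ((mem_doubleList l _).1 h1)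
    · intro h1
      exact h.1 ((mem_doubleList l _).1 h1)

lemma chain_doubleList {V : Type*} (G : SimpleGraph V) (vs : List V)
    (h : vs.Chain' G.Adj) : (doubleList vs).Chain' (DbarAdj G) := by
  induction vs with
  | nil => simp [doubleList_nil, List.Chain', List.isChain_nil]
  | cons v l ih =>
    cases l with
    | nil => simp [doubleList_cons, doubleList_nil, DbarAdj, List.Chain', List.isChain_pair]
    | cons w m =>
      rw [List.Chain', List.isChain_cons_cons] at h
      have := ih h.2
      simp only [doubleList_cons] at this ⊢
      refine List.IsChain.cons_cons (Or.inl ⟨rfl, rfl, rfl⟩) (List.IsChain.cons_cons ?_ this)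
      exact Or.inr ⟨rfl, rfl, h.1⟩

lemma getLast?_doubleList {V : Type*} (vs : List V) :
    (doubleList vs).getLast? = vs.getLast?.map (·, true) := by
  induction vs with
  | nil => simp [doubleList_nil]
  | cons v l ih =>
    cases l with
    | nil => simp [doubleList_cons, doubleList_nil]
    | cons w m =>
      rw [doubleList_cons, doubleList_cons, List.getLast?_cons_cons,
        List.getLast?_cons_cons, ← doubleList_cons, ih, List.getLast?_cons_cons]

/-- If `v₁,…,v_k` with `v₁ = s`, `v_k = t` is a Hamiltonian `s`-`t` path in `G`
(so `k = |V|`), then `(v₁,1),(v₁,2),…,(v_k,1),(v_k,2)` is a directed Hamiltonian path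
in `Ḡ` from `(s,1)` to `(t,2)`: a directed path (consecutive pairs are edges of `Ḡ`,
vertices pairwise distinct) visiting every vertex of `V × {1,2}` exactly once. -/
theorem stmt2 {V : Type*} [Fintype V] [DecidableEq V] (G : SimpleGraph V)
    (s t : V) (hst : s ≠ t) (vs : List V)
    (hchain : vs.Chain' G.Adj) (hnodup : vs.Nodup)
    (hhead : vs.head? = some s) (hlast : vs.getLast? = some t)
    (hall : ∀ v : V, v ∈ vs) :
    vs.length = Fintype.card V ∧
    (doubleList vs).Chain' (DbarAdj G) ∧ (doubleList vs).Nodup ∧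
    (doubleList vs).head? = some (s, false) ∧
    (doubleList vs).getLast? = some (t, true) ∧
    (∀ x : V × Bool, x ∈ doubleList vs) := by
  refine ⟨?_, chain_doubleList G vs hchain, nodup_doubleList vs hnodup, ?_, ?_, ?_⟩
  · have : vs.toFinset = Finset.univ := Finset.eq_univ_iff_forall.2 (by simpa using hall)
    calc vs.length = vs.toFinset.card := (List.toFinset_card_of_nodup hnodup).symm
    _ = Fintype.card V := by rw [this, Finset.card_univ]
  · cases vs with
    | nil => simp at hhead
    | cons v l =>
      simp only [List.head?_cons, Option.some.injEq] at hhead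
      simp [doubleList_cons, hhead]
  · rw [getLast?_doubleList, hlast]; rfl
  · intro x
    exact (mem_doubleList vs x).2 (hall x.1)
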